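/- The longest element of any parabolic subgroup of S_{n+1} generated by simple reflections is triangular. -/

import Mathlib

def IsTriangularPerm (n : ℕ) (w : Equiv.Perm ℕ) : Prop :=
  ∀ i k j l : ℕ, 1 ≤ i → i < k → k ≤ j → j < l → l ≤ n + 1 →
    w j < w i → w l < w k → w l < w i ∧ w j ≤ w k

/-- The Coxeter length of `w ∈ S_{n+1}`: the number of inversions. -/
def invNum (n : ℕ) (w : Equiv.Perm ℕ) : ℕ :=
  ((Finset.Icc 1 (n + 1) ×ˢ Finset.Icc 1 (n + 1)).filter
    fun p => p.1 < p.2 ∧ w p.2 < w p.1).card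

/-- Elements of the parabolic subgroup preserve the initial segment `{x ≤ c}` for `c ∉ J`. -/
lemma aux_segment (J : Set ℕ) (w : Equiv.Perm ℕ)
    (hw : w ∈ Subgroup.closure ((fun i => Equiv.swap i (i + 1)) '' J))
    (c : ℕ) (hc : c ∉ J) : ∀ x, w x ≤ c ↔ x ≤ c := by
  induction hw using Subgroup.closure_induction with
  | mem g hg =>
    obtain ⟨i, hi, rfl⟩ := hg
    intro x
    have hic : i ≠ c := fun h => hc (h ▸ hi)
    rw [Equiv.swap_apply_def]
    split_ifs <;> omega
  | one => simp
  | mul a b ha hb iha ihb =>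
    intro x
    rw [Equiv.Perm.mul_apply, iha, ihb]
  | inv a ha iha =>
    intro x
    rw [← iha (a⁻¹ x), ← Equiv.Perm.mul_apply, mul_inv_cancel, Equiv.Perm.one_apply]

/-- Inversions of an element of the parabolic subgroup lie within a block of `J`. -/
lemma aux_block (J : Set ℕ) (w : Equiv.Perm ℕ)
    (hw : w ∈ Subgroup.closure ((fun i => Equiv.swap i (i + 1)) '' J))
    (a b : ℕ) (hab : a < b) (hinv : w b < w a) :
    ∀ c, a ≤ c → c < b → c ∈ J := by
  intro c hac hcb
  by_contra hc
  have h := aux_segment J w hw c hc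
  have h1 : w a ≤ c := (h a).mpr hac
  have h2 : b ≤ c := (h b).mp (le_trans (le_of_lt hinv) h1)
  omega

/-- The longest element has a descent at every `c ∈ J`. -/
lemma aux_descent (n : ℕ) (J : Set ℕ) (hJ : J ⊆ Set.Icc 1 n) (w : Equiv.Perm ℕ)
    (hw : w ∈ Subgroup.closure ((fun i => Equiv.swap i (i + 1)) '' J))
    (hlongest : ∀ v ∈ Subgroup.closure ((fun i => Equiv.swap i (i + 1)) '' J),
      invNum n v ≤ invNum n w)
    (c : ℕ) (hc : c ∈ J) : w (c + 1) < w c := by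
  by_contra hcon
  have hcc : c ≠ c + 1 := by omega
  have hne : w c ≠ w (c + 1) := fun h => hcc (w.injective h)
  have hlt : w c < w (c + 1) := by
    rcases lt_or_ge (w c) (w (c + 1)) with h | h
    · exact h
    · exact absurd (lt_of_le_of_ne h (Ne.symm hne)) hcon
  obtain ⟨hc1, hc2⟩ := hJ hc
  set s : Equiv.Perm ℕ := Equiv.swap c (c + 1) with hs
  have hsH : s ∈ Subgroup.closure ((fun i => Equiv.swap i (i + 1)) '' J) :=
    Subgroup.subset_closure ⟨c, hc, rfl⟩
  set v : Equiv.Perm ℕ := w * s with hv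
  have hvH : v ∈ Subgroup.closure ((fun i => Equiv.swap i (i + 1)) '' J) :=
    mul_mem hw hsH
  -- the inversion sets
  set Aw := ((Finset.Icc 1 (n + 1) ×ˢ Finset.Icc 1 (n + 1)).filter
    fun p => p.1 < p.2 ∧ w p.2 < w p.1) with hAw
  set Av := ((Finset.Icc 1 (n + 1) ×ˢ Finset.Icc 1 (n + 1)).filter
    fun p => p.1 < p.2 ∧ v p.2 < v p.1) with hAv
  have hvapp : ∀ x, v (s x) = w x := by
    intro x
    rw [hv, Equiv.Perm.mul_apply, hs, Equiv.swap_apply_self]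
  -- image map
  have himg : ∀ p ∈ Aw, (s p.1, s p.2) ∈ Av := by
    rintro ⟨a, b⟩ hp
    simp only [hAw, Finset.mem_filter, Finset.mem_product, Finset.mem_Icc] at hp
    obtain ⟨⟨⟨ha1, ha2⟩, hb1, hb2⟩, hab, hwba⟩ := hp
    have hnotcc : ¬(a = c ∧ b = c + 1) := by
      rintro ⟨rfl, rfl⟩; omega
    simp only [hAv, Finset.mem_filter, Finset.mem_product, Finset.mem_Icc]
    have hsa : s a = if a = c then c + 1 else if a = c + 1 then c else a :=
      hs ▸ Equiv.swap_apply_def c (c + 1) a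
    have hsb : s b = if b = c then c + 1 else if b = c + 1 then c else b :=
      hs ▸ Equiv.swap_apply_def c (c + 1) b
    refine ⟨⟨⟨?_, ?_⟩, ?_, ?_⟩, ?_, ?_⟩
    · rw [hsa]; split_ifs <;> omega
    · rw [hsa]; split_ifs <;> omega
    · rw [hsb]; split_ifs <;> omega
    · rw [hsb]; split_ifs <;> omega
    · rw [hsa, hsb]; split_ifs <;> omega
    · rw [hvapp a, hvapp b]; exact hwba
  have hinj : Set.InjOn (fun p : ℕ × ℕ => (s p.1, s p.2)) Aw := by
    intro p _ q _ h
    simp only [Prod.mk.injEq] at h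
    exact Prod.ext (s.injective h.1) (s.injective h.2)
  have hsub : insert (c, c + 1) (Aw.image fun p => (s p.1, s p.2)) ⊆ Av := by
    intro p hp
    rcases Finset.mem_insert.mp hp with rfl | hp
    · simp only [hAv, Finset.mem_filter, Finset.mem_product, Finset.mem_Icc]
      refine ⟨⟨⟨by omega, by omega⟩, by omega, by omega⟩, by omega, ?_⟩
      have h1 : v c = w (c + 1) := by
        have := hvapp (c + 1)
        rwa [Equiv.swap_apply_right] at this
      have h2 : v (c + 1) = w c := by
        have := hvapp c
        rwa [Equiv.swap_apply_left] at this
      rw [h1, h2]; exact hlt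
    · obtain ⟨q, hq, rfl⟩ := Finset.mem_image.mp hp
      exact himg q hq
  have hnotmem : (c, c + 1) ∉ Aw.image fun p => (s p.1, s p.2) := by
    intro h
    obtain ⟨⟨a, b⟩, hq, heq⟩ := Finset.mem_image.mp h
    simp only [Prod.mk.injEq] at heq
    have ha : a = c + 1 := s.injective (by rw [heq.1, Equiv.swap_apply_right])
    have hb : b = c := s.injective (by rw [heq.2, Equiv.swap_apply_left])
    simp only [hAw, Finset.mem_filter] at hq
    omega
  have hcard : invNum n w + 1 ≤ invNum n v := by
    have h1 : (insert (c, c + 1) (Aw.image fun p => (s p.1, s p.2))).card =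
        Aw.card + 1 := by
      rw [Finset.card_insert_of_notMem hnotmem, Finset.card_image_of_injOn hinj]
    calc invNum n w + 1 = (insert (c, c + 1) (Aw.image fun p => (s p.1, s p.2))).card := by
          rw [h1]; rfl
      _ ≤ Av.card := Finset.card_le_card hsub
      _ = invNum n v := rfl
  have := hlongest v hvH
  omega

theorem stmt6 (n : ℕ) (J : Set ℕ) (hJ : J ⊆ Set.Icc 1 n) (w : Equiv.Perm ℕ)
    (hw : w ∈ Subgroup.closure ((fun i => Equiv.swap i (i + 1)) '' J))
    (hlongest : ∀ v ∈ Subgroup.closure ((fun i => Equiv.swap i (i + 1)) '' J),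
      invNum n v ≤ invNum n w) :
    IsTriangularPerm n w := by
  intro i k j l hi hik hkj hjl hl hji hlk
  -- all of [i, l) lies in J
  have hblock : ∀ c, i ≤ c → c < l → c ∈ J := by
    intro c h1 h2
    rcases lt_or_ge c j with h | h
    · exact aux_block J w hw i j (by omega) hji c h1 h
    · exact aux_block J w hw k l (by omega) hlk c (by omega) h2
  -- w reverses any interval contained in J
  have hchain : ∀ y x, x < y → (∀ c, x ≤ c → c < y → c ∈ J) → w y < w x := by
    intro y
    induction y with
    | zero => omega
    | succ m ih =>
      intro x hxy hc
      rcases eq_or_lt_of_le (Nat.lt_succ_iff.mp hxy) with rfl | hxm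
      · exact aux_descent n J hJ w hw hlongest x (hc x le_rfl (Nat.lt_succ_self x))
      · exact lt_trans
          (aux_descent n J hJ w hw hlongest m (hc m (by omega) (Nat.lt_succ_self m)))
          (ih x hxm fun c h1 h2 => hc c h1 (by omega))
  constructor
  · exact hchain l i (by omega) fun c h1 h2 => hblock c h1 h2
  · rcases eq_or_lt_of_le hkj with rfl | hkj'
    · exact le_rfl
    · exact le_of_lt (hchain j k hkj' fun c h1 h2 => hblock c (by omega) (by omega))
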